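/- Let Γ = Γ̊ × ℝ^{n−k} where Γ̊ ⊂ ℝ^{k+m} is compact, with Gaussian weight ρ = (4π)^{-n/2}e^{-|x|²/4}. There is a constant C = C(n, Γ̊) such that for every u ∈ W^{1,2}(Γ, ρ), ∫_Γ ⟨x⟩² u² ρ ≤ C(∫_Γ u² ρ + ∫_Γ |∇̄u|² ρ), where ∇̄ denotes the gradient in the Euclidean factor ℝ^{n−k} directions. -/

import Mathlib

open MeasureTheory Real Finset

open Filter Topology

lemma tendsto_zero_of_integrable {h : ℝ → ℝ} {L : ℝ} (hint : Integrable h)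
    (hl : Tendsto h atTop (𝓝 L)) : L = 0 := by
  by_contra hL
  have hc : 0 < |L| / 2 := by positivity
  have hev : ∀ᶠ t in atTop, |L| / 2 ≤ |h t| :=
    hl.abs.eventually (eventually_ge_nhds (by linarith : |L| / 2 < |L|))
  obtain ⟨N, hN⟩ := hev.exists_forall_of_atTop
  have hio : IntegrableOn (fun t => |h t|) (Set.Ioi N) := hint.abs.integrableOn
  have hconst : Integrable (fun _ : ℝ => |L| / 2) (volume.restrict (Set.Ioi N)) := by
    refine Integrable.mono' hio aestronglyMeasurable_const ?_
    refine (ae_restrict_iff' measurableSet_Ioi).2 (Filter.Eventually.of_forall fun t ht => ?_)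
    simpa [abs_of_pos hc] using hN t (le_of_lt ht)
  rw [integrable_const_iff] at hconst
  rcases hconst with h0 | hfin
  · exact absurd h0 (by positivity)
  · have hfin := hfin.measure_univ_lt_top
    simp [Measure.restrict_apply_univ] at hfin

lemma tendsto_zero_of_integrable_bot {h : ℝ → ℝ} {L : ℝ} (hint : Integrable h)
    (hl : Tendsto h atBot (𝓝 L)) : L = 0 := by
  have hint' : Integrable (fun t => h (-t)) := by
    simpa using hint.comp_neg
  exact tendsto_zero_of_integrable hint' (hl.comp tendsto_neg_atTop_atBot)

/-- 1D Gaussian IBP inequality. -/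
lemma oneD {g : ℝ → ℝ} (hg : Differentiable ℝ g)
    (h1 : Integrable (fun t => g t ^ 2 * Real.exp (-(t ^ 2) / 4)))
    (h2 : Integrable (fun t => deriv g t ^ 2 * Real.exp (-(t ^ 2) / 4)))
    (h3 : Integrable (fun t => t ^ 2 * g t ^ 2 * Real.exp (-(t ^ 2) / 4))) :
    ∫ t, t ^ 2 * g t ^ 2 * Real.exp (-(t ^ 2) / 4) ≤
      4 * (∫ t, g t ^ 2 * Real.exp (-(t ^ 2) / 4)) +
      16 * ∫ t, deriv g t ^ 2 * Real.exp (-(t ^ 2) / 4) := by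
  set w : ℝ → ℝ := fun t => Real.exp (-(t ^ 2) / 4) with hw
  have hwpos : ∀ t, 0 < w t := fun t => Real.exp_pos _
  set h : ℝ → ℝ := fun t => t * g t ^ 2 * w t with hh
  set φ : ℝ → ℝ := fun t =>
    (g t ^ 2 * w t + 2 * t * g t * deriv g t * w t) - t ^ 2 / 2 * (g t ^ 2 * w t) with hφ
  -- derivative
  have hderiv : ∀ t, HasDerivAt h (φ t) t := by
    intro t
    have hwderiv : HasDerivAt w (w t * (-(t / 2))) t := by
      have h0 : HasDerivAt (fun t : ℝ => -(t ^ 2) / 4) (-(t / 2)) t := by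
        have := ((hasDerivAt_pow 2 t).neg).div_const 4
        exact this.congr_deriv (by ring)
      exact h0.exp
    have hgd : HasDerivAt g (deriv g t) t := (hg t).hasDerivAt
    have H := (((hasDerivAt_id t).mul (hgd.pow 2)).mul hwderiv)
    refine H.congr_deriv ?_
    simp [hφ, hh]
    ring
  -- integrability of middle term
  have hgc : Continuous g := hg.continuous
  have hwc : Continuous w := by fun_prop
  have hmeas2 : AEStronglyMeasurable (fun t => 2 * t * g t * deriv g t * w t) volume := by
    exact ((((measurable_const.mul measurable_id).mul hgc.measurable).mul
      (measurable_deriv g)).mul hwc.measurable).aestronglyMeasurable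
  have hIntB : Integrable (fun t => 2 * t * g t * deriv g t * w t) := by
    refine Integrable.mono' (h3.add h2) hmeas2 (Filter.Eventually.of_forall fun t => ?_)
    simp only [hw, Pi.add_apply, Real.norm_eq_abs, abs_le]
    constructor <;> nlinarith [sq_nonneg (t * g t - deriv g t), sq_nonneg (t * g t + deriv g t),
      Real.exp_pos (-t ^ 2 / 4)]
  have hIntC : Integrable (fun t => t ^ 2 / 2 * (g t ^ 2 * w t)) := by
    have := h3.const_mul (1 / 2)
    refine this.congr (Filter.Eventually.of_forall fun t => ?_)
    ring
  have hφint : Integrable φ := (h1.add hIntB).sub hIntC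
  -- integrability of h
  have hhint : Integrable h := by
    refine Integrable.mono' (h1.add h3)
      (((continuous_id.mul (hgc.pow 2)).mul hwc).aestronglyMeasurable)
      (Filter.Eventually.of_forall fun t => ?_)
    simp only [hh, hw, Pi.add_apply, Real.norm_eq_abs, abs_le]
    constructor <;> nlinarith [sq_nonneg (g t), sq_nonneg ((1 - t) * g t), sq_nonneg ((1 + t) * g t),
      Real.exp_pos (-t ^ 2 / 4), sq_nonneg (g t ^ 2 * Real.exp (-t ^ 2 / 4))]
  -- limits
  have hFTC : ∀ x : ℝ, ∫ t in (0:ℝ)..x, φ t = h x - h 0 := fun x =>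
    intervalIntegral.integral_eq_sub_of_hasDerivAt (fun t _ => hderiv t)
      (hφint.intervalIntegrable)
  have htop : Tendsto h atTop (𝓝 (h 0 + ∫ t in Set.Ioi (0:ℝ), φ t)) := by
    have := intervalIntegral_tendsto_integral_Ioi (0:ℝ) hφint.integrableOn tendsto_id
    have h2' : Tendsto (fun x => h 0 + ∫ t in (0:ℝ)..x, φ t) atTop
        (𝓝 (h 0 + ∫ t in Set.Ioi (0:ℝ), φ t)) := tendsto_const_nhds.add this
    refine h2'.congr fun x => ?_
    rw [hFTC x]; ring
  have hbot : Tendsto h atBot (𝓝 (h 0 - ∫ t in Set.Iic (0:ℝ), φ t)) := by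
    have := intervalIntegral_tendsto_integral_Iic (0:ℝ) hφint.integrableOn tendsto_id
    have h2' : Tendsto (fun x => h 0 - ∫ t in x..(0:ℝ), φ t) atBot
        (𝓝 (h 0 - ∫ t in Set.Iic (0:ℝ), φ t)) := tendsto_const_nhds.sub this
    refine h2'.congr fun x => ?_
    rw [intervalIntegral.integral_symm, hFTC x]; ring
  have hLtop := tendsto_zero_of_integrable hhint htop
  have hLbot := tendsto_zero_of_integrable_bot hhint hbot
  have hsplit : ∫ t, φ t = (∫ t in Set.Iic (0:ℝ), φ t) + ∫ t in Set.Ioi (0:ℝ), φ t := by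
    have := integral_add_compl (measurableSet_Iic : MeasurableSet (Set.Iic (0:ℝ))) hφint
    rw [Set.compl_Iic] at this
    exact this.symm
  have hφ0 : ∫ t, φ t = 0 := by rw [hsplit]; linarith
  -- expand ∫ φ
  have hexp : ∫ t, φ t = ((∫ t, g t ^ 2 * w t) + ∫ t, 2 * t * g t * deriv g t * w t)
      - ∫ t, t ^ 2 / 2 * (g t ^ 2 * w t) := by
    have hIntAB : Integrable (fun t => g t ^ 2 * w t + 2 * t * g t * deriv g t * w t) volume :=
      h1.add hIntB
    rw [show φ = fun t => (g t ^ 2 * w t + 2 * t * g t * deriv g t * w t)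
        - t ^ 2 / 2 * (g t ^ 2 * w t) from rfl,
      integral_sub hIntAB hIntC, integral_add h1 hIntB]
  have hhalf : ∫ t, t ^ 2 / 2 * (g t ^ 2 * w t) = (1/2) * ∫ t, t ^ 2 * g t ^ 2 * w t := by
    rw [← integral_const_mul]
    congr 1; funext t; ring
  -- bound the middle term
  have hmid : ∫ t, 2 * t * g t * deriv g t * w t ≤
      (1/4) * (∫ t, t ^ 2 * g t ^ 2 * w t) + 4 * ∫ t, deriv g t ^ 2 * w t := by
    have hrhsint : Integrable (fun t => 1/4 * (t ^ 2 * g t ^ 2 * w t) + 4 * (deriv g t ^ 2 * w t)) :=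
      (h3.const_mul (1/4)).add (h2.const_mul 4)
    have := integral_mono hIntB hrhsint (fun t => by
      have hwp := (hwpos t).le
      nlinarith [sq_nonneg (t * g t / 2 - 2 * deriv g t)])
    calc ∫ t, 2 * t * g t * deriv g t * w t ≤
        ∫ t, (1/4 * (t ^ 2 * g t ^ 2 * w t) + 4 * (deriv g t ^ 2 * w t)) := this
      _ = (1/4) * (∫ t, t ^ 2 * g t ^ 2 * w t) + 4 * ∫ t, deriv g t ^ 2 * w t := by
          rw [integral_add (h3.const_mul (1/4)) (h2.const_mul 4), integral_const_mul,
            integral_const_mul]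
  have h1nn : 0 ≤ ∫ t, g t ^ 2 * w t := integral_nonneg fun t => by positivity
  rw [hexp, hhalf] at hφ0
  linarith

lemma integrable_of_mul_const {K : ℝ} (hK : K ≠ 0) {f : ℝ → ℝ}
    (h : Integrable (fun t => f t * K)) : Integrable f :=
  (h.mul_const K⁻¹).congr (Filter.Eventually.of_forall fun t => by field_simp)

lemma Rd {d : ℕ} (i : Fin d) {v : (Fin d → ℝ) → ℝ} (hv : Differentiable ℝ v)
    (h1 : Integrable (fun y => v y ^ 2 * Real.exp (-(∑ j, y j ^ 2) / 4)))
    (h2 : Integrable (fun y => ‖fderiv ℝ v y‖ ^ 2 * Real.exp (-(∑ j, y j ^ 2) / 4)))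
    (h3 : Integrable (fun y => y i ^ 2 * (v y ^ 2 * Real.exp (-(∑ j, y j ^ 2) / 4)))) :
    ∫ y, y i ^ 2 * (v y ^ 2 * Real.exp (-(∑ j, y j ^ 2) / 4)) ≤
      4 * (∫ y, v y ^ 2 * Real.exp (-(∑ j, y j ^ 2) / 4)) +
      16 * ∫ y, ‖fderiv ℝ v y‖ ^ 2 * Real.exp (-(∑ j, y j ^ 2) / 4) := by
  obtain ⟨e, rfl⟩ : ∃ e, d = e + 1 := ⟨d - 1, (Nat.succ_pred_eq_of_pos i.pos).symm⟩
  set W : (Fin (e + 1) → ℝ) → ℝ := fun y => Real.exp (-(∑ j, y j ^ 2) / 4) with hWdef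
  set T := MeasurableEquiv.piFinSuccAbove (fun _ : Fin (e + 1) => ℝ) i with hT
  have MP : MeasurePreserving T volume ((volume : Measure ℝ).prod volume) :=
    volume_preserving_piFinSuccAbove (fun _ : Fin (e + 1) => ℝ) i
  have hsymm : ∀ q : ℝ × (Fin e → ℝ), T.symm q = i.insertNth q.1 q.2 := fun q => rfl
  -- the three functions on the product space
  set G1 : ℝ × (Fin e → ℝ) → ℝ := fun q => v (i.insertNth q.1 q.2) ^ 2 * W (i.insertNth q.1 q.2)
    with hG1def
  set G2 : ℝ × (Fin e → ℝ) → ℝ := fun q =>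
    ‖fderiv ℝ v (i.insertNth q.1 q.2)‖ ^ 2 * W (i.insertNth q.1 q.2) with hG2def
  set G3 : ℝ × (Fin e → ℝ) → ℝ := fun q =>
    (i.insertNth q.1 q.2 : Fin (e + 1) → ℝ) i ^ 2 *
      (v (i.insertNth q.1 q.2) ^ 2 * W (i.insertNth q.1 q.2)) with hG3def
  -- transport integrals and integrability
  have htrans : ∀ F : (Fin (e + 1) → ℝ) → ℝ, Integrable F volume →
      (Integrable (fun q : ℝ × (Fin e → ℝ) => F (i.insertNth q.1 q.2))
        ((volume : Measure ℝ).prod volume)) ∧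
      (∫ y, F y) = ∫ q : ℝ × (Fin e → ℝ), F (i.insertNth q.1 q.2)
        ∂((volume : Measure ℝ).prod volume) := by
    intro F hF
    have MPs : MeasurePreserving T.symm ((volume : Measure ℝ).prod volume) volume :=
      MeasurePreserving.symm T MP
    have hmap : Measure.map T.symm ((volume : Measure ℝ).prod volume) = volume := MPs.map_eq
    constructor
    · have : Integrable F (Measure.map T.symm ((volume : Measure ℝ).prod volume)) := by
        rwa [hmap]
      have := (T.symm.measurableEmbedding.integrable_map_iff).1 this
      refine this.congr (Filter.Eventually.of_forall fun q => ?_)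
      rw [Function.comp_apply, hsymm]
    · have MPs : MeasurePreserving T.symm ((volume : Measure ℝ).prod volume) volume :=
        MeasurePreserving.symm T MP
      have := MPs.integral_comp' F
      rw [← this]
      refine integral_congr_ae (Filter.Eventually.of_forall fun q => ?_)
      show F (T.symm q) = F (i.insertNth q.1 q.2)
      rw [hsymm]
  have hG1 := htrans _ h1
  have hG2 := htrans _ h2
  have hG3 := htrans _ h3
  -- exponent factorization
  have hsum : ∀ (t : ℝ) (y' : Fin e → ℝ),
      ∑ j, (i.insertNth t y') j ^ 2 = t ^ 2 + ∑ j, y' j ^ 2 := by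
    intro t y'
    rw [Fin.sum_univ_succAbove (fun j => (i.insertNth t y' : Fin (e + 1) → ℝ) j ^ 2) i]
    simp [Fin.insertNth_apply_same, Fin.insertNth_apply_succAbove]
  have hW : ∀ (t : ℝ) (y' : Fin e → ℝ),
      W (i.insertNth t y') = Real.exp (-(t ^ 2) / 4) * Real.exp (-(∑ j, y' j ^ 2) / 4) := by
    intro t y'
    rw [hWdef]; simp only []
    rw [hsum, ← Real.exp_add]
    congr 1; ring
  -- a.e. slice inequality
  have hslice : ∀ᵐ y' : Fin e → ℝ, (∫ t, G3 (t, y')) ≤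
      4 * (∫ t, G1 (t, y')) + 16 * ∫ t, G2 (t, y') := by
    filter_upwards [hG1.1.prod_left_ae, hG2.1.prod_left_ae, hG3.1.prod_left_ae]
      with y' hs1 hs2 hs3
    set K := Real.exp (-(∑ j, y' j ^ 2) / 4) with hK
    have hKpos : 0 < K := Real.exp_pos _
    set g : ℝ → ℝ := fun t => v (i.insertNth t y') with hg
    -- rewrite slices
    have e1 : ∀ t, G1 (t, y') = g t ^ 2 * Real.exp (-(t ^ 2) / 4) * K := by
      intro t; rw [hG1def]; simp only []; rw [hW]; ring
    have e2 : ∀ t, G2 (t, y') =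
        ‖fderiv ℝ v (i.insertNth t y')‖ ^ 2 * Real.exp (-(t ^ 2) / 4) * K := by
      intro t; rw [hG2def]; simp only []; rw [hW]; ring
    have e3 : ∀ t, G3 (t, y') = t ^ 2 * g t ^ 2 * Real.exp (-(t ^ 2) / 4) * K := by
      intro t; rw [hG3def]; simp only []; rw [hW, Fin.insertNth_apply_same]; ring
    -- differentiability of the slice
    have hins : ∀ t : ℝ, (i.insertNth t y' : Fin (e + 1) → ℝ) =
        (i.insertNth 0 y' : Fin (e + 1) → ℝ) + t • (Pi.single i 1 : Fin (e + 1) → ℝ) := by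
      intro t; funext j
      refine i.succAboveCases ?_ ?_ j
      · simp [Fin.insertNth_apply_same]
      · intro j'
        simp [Fin.insertNth_apply_succAbove, Pi.single_eq_of_ne (Fin.succAbove_ne i j')]
    have hgd : ∀ t : ℝ, HasDerivAt g (fderiv ℝ v (i.insertNth t y') (Pi.single i 1)) t := by
      intro t
      have hl : HasDerivAt (fun s : ℝ => (i.insertNth 0 y' : Fin (e + 1) → ℝ) +
          s • (Pi.single i 1 : Fin (e + 1) → ℝ)) (Pi.single i 1) t := by
        simpa using ((hasDerivAt_id t).smul_const
          (Pi.single i 1 : Fin (e + 1) → ℝ)).const_add (i.insertNth 0 y' : Fin (e + 1) → ℝ)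
      have key := (hv ((i.insertNth 0 y' : Fin (e + 1) → ℝ) +
        t • (Pi.single i 1 : Fin (e + 1) → ℝ))).hasFDerivAt.comp_hasDerivAt t hl
      simp only [← hins] at key
      exact key
    have hgdiff : Differentiable ℝ g := fun t => (hgd t).differentiableAt
    have hdb : ∀ t, deriv g t ^ 2 ≤ ‖fderiv ℝ v (i.insertNth t y')‖ ^ 2 := by
      intro t
      have h' : |deriv g t| ≤ ‖fderiv ℝ v (i.insertNth t y')‖ := by
        rw [(hgd t).deriv]
        have := (fderiv ℝ v (i.insertNth t y')).le_opNorm (Pi.single i (1:ℝ))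
        simpa [Pi.norm_single] using this
      calc deriv g t ^ 2 = |deriv g t| ^ 2 := (sq_abs _).symm
        _ ≤ ‖fderiv ℝ v (i.insertNth t y')‖ ^ 2 := by
            exact pow_le_pow_left₀ (abs_nonneg _) h' 2
    -- 1D integrabilities
    have hi1 : Integrable (fun t => g t ^ 2 * Real.exp (-(t ^ 2) / 4)) := by
      refine integrable_of_mul_const hKpos.ne' ?_
      refine hs1.congr (Filter.Eventually.of_forall fun t => ?_)
      show G1 (t, y') = g t ^ 2 * Real.exp (-(t ^ 2) / 4) * K
      exact e1 t
    have hi2' : Integrable (fun t => ‖fderiv ℝ v (i.insertNth t y')‖ ^ 2 *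
        Real.exp (-(t ^ 2) / 4)) := by
      refine integrable_of_mul_const hKpos.ne' ?_
      refine hs2.congr (Filter.Eventually.of_forall fun t => ?_)
      show G2 (t, y') = ‖fderiv ℝ v (i.insertNth t y')‖ ^ 2 * Real.exp (-(t ^ 2) / 4) * K
      exact e2 t
    have hi3 : Integrable (fun t => t ^ 2 * g t ^ 2 * Real.exp (-(t ^ 2) / 4)) := by
      refine integrable_of_mul_const hKpos.ne' ?_
      refine hs3.congr (Filter.Eventually.of_forall fun t => ?_)
      show G3 (t, y') = t ^ 2 * g t ^ 2 * Real.exp (-(t ^ 2) / 4) * K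
      exact e3 t
    have hi2 : Integrable (fun t => deriv g t ^ 2 * Real.exp (-(t ^ 2) / 4)) := by
      refine Integrable.mono' hi2'
        (((measurable_deriv g).pow_const 2).aestronglyMeasurable.mul
          (Real.continuous_exp.comp (by fun_prop)).aestronglyMeasurable)
        (Filter.Eventually.of_forall fun t => ?_)
      rw [Real.norm_eq_abs, abs_of_nonneg (by positivity)]
      exact mul_le_mul_of_nonneg_right (hdb t) (Real.exp_pos _).le
    have h1d := oneD hgdiff hi1 hi2 hi3
    have hmono : ∫ t, deriv g t ^ 2 * Real.exp (-(t ^ 2) / 4) ≤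
        ∫ t, ‖fderiv ℝ v (i.insertNth t y')‖ ^ 2 * Real.exp (-(t ^ 2) / 4) :=
      integral_mono hi2 hi2' fun t =>
        mul_le_mul_of_nonneg_right (hdb t) (Real.exp_pos _).le
    -- put it together
    have eint1 : ∫ t, G1 (t, y') = (∫ t, g t ^ 2 * Real.exp (-(t ^ 2) / 4)) * K := by
      rw [← integral_mul_const]
      exact integral_congr_ae (Filter.Eventually.of_forall fun t => e1 t)
    have eint2 : ∫ t, G2 (t, y') =
        (∫ t, ‖fderiv ℝ v (i.insertNth t y')‖ ^ 2 * Real.exp (-(t ^ 2) / 4)) * K := by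
      rw [← integral_mul_const]
      exact integral_congr_ae (Filter.Eventually.of_forall fun t => e2 t)
    have eint3 : ∫ t, G3 (t, y') = (∫ t, t ^ 2 * g t ^ 2 * Real.exp (-(t ^ 2) / 4)) * K := by
      rw [← integral_mul_const]
      exact integral_congr_ae (Filter.Eventually.of_forall fun t => e3 t)
    rw [eint1, eint2, eint3]
    have hstep : (∫ t, t ^ 2 * g t ^ 2 * Real.exp (-(t ^ 2) / 4)) ≤
        4 * (∫ t, g t ^ 2 * Real.exp (-(t ^ 2) / 4)) +
          16 * ∫ t, ‖fderiv ℝ v (i.insertNth t y')‖ ^ 2 * Real.exp (-(t ^ 2) / 4) := by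
      linarith [h1d, hmono]
    calc (∫ t, t ^ 2 * g t ^ 2 * Real.exp (-(t ^ 2) / 4)) * K ≤
        (4 * (∫ t, g t ^ 2 * Real.exp (-(t ^ 2) / 4)) +
          16 * ∫ t, ‖fderiv ℝ v (i.insertNth t y')‖ ^ 2 * Real.exp (-(t ^ 2) / 4)) * K :=
        mul_le_mul_of_nonneg_right hstep hKpos.le
      _ = 4 * ((∫ t, g t ^ 2 * Real.exp (-(t ^ 2) / 4)) * K) +
          16 * ((∫ t, ‖fderiv ℝ v (i.insertNth t y')‖ ^ 2 * Real.exp (-(t ^ 2) / 4)) * K) := by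
          ring
  -- integrate the slice inequality
  have hO1 : Integrable (fun y' : Fin e → ℝ => ∫ t, G1 (t, y')) volume :=
    hG1.1.integral_prod_right
  have hO2 : Integrable (fun y' : Fin e → ℝ => ∫ t, G2 (t, y')) volume :=
    hG2.1.integral_prod_right
  have hO3 : Integrable (fun y' : Fin e → ℝ => ∫ t, G3 (t, y')) volume :=
    hG3.1.integral_prod_right
  have hfinal : ∫ y', (∫ t, G3 (t, y')) ≤
      ∫ y' : Fin e → ℝ, (4 * (∫ t, G1 (t, y')) + 16 * ∫ t, G2 (t, y')) :=
    integral_mono_ae hO3 ((hO1.const_mul 4).add (hO2.const_mul 16)) hslice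
  have hlhs : ∫ y, (fun y => y i ^ 2 * (v y ^ 2 * W y)) y =
      ∫ y' : Fin e → ℝ, ∫ t, G3 (t, y') := by
    rw [hG3.2, integral_prod_symm _ hG3.1]
  have hr1 : (∫ y, v y ^ 2 * W y) = ∫ y' : Fin e → ℝ, ∫ t, G1 (t, y') := by
    rw [hG1.2, integral_prod_symm _ hG1.1]
  have hr2 : (∫ y, ‖fderiv ℝ v y‖ ^ 2 * W y) = ∫ y' : Fin e → ℝ, ∫ t, G2 (t, y') := by
    rw [hG2.2, integral_prod_symm _ hG2.1]
  calc ∫ y, y i ^ 2 * (v y ^ 2 * W y) = ∫ y' : Fin e → ℝ, ∫ t, G3 (t, y') := hlhs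
    _ ≤ ∫ y' : Fin e → ℝ, (4 * (∫ t, G1 (t, y')) + 16 * ∫ t, G2 (t, y')) := hfinal
    _ = 4 * (∫ y' : Fin e → ℝ, ∫ t, G1 (t, y')) +
        16 * ∫ y' : Fin e → ℝ, ∫ t, G2 (t, y') := by
        rw [integral_add (hO1.const_mul 4) (hO2.const_mul 16), integral_const_mul,
          integral_const_mul]
    _ = 4 * (∫ y, v y ^ 2 * W y) + 16 * ∫ y, ‖fderiv ℝ v y‖ ^ 2 * W y := by
        rw [hr1, hr2]

lemma integrable_of_mul_const' {α : Type*} [MeasurableSpace α] {μ : Measure α} {K : ℝ}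
    (hK : K ≠ 0) {f : α → ℝ} (h : Integrable (fun t => f t * K) μ) : Integrable f μ :=
  (h.mul_const K⁻¹).congr (Filter.Eventually.of_forall fun t => by field_simp)

lemma per_i {P : Type*} [MeasureSpace P] [IsFiniteMeasure (volume : Measure P)]
    {d : ℕ} (i : Fin d) (a : P → ℝ) (c : ℝ) (hc : 0 < c)
    (u : P × (Fin d → ℝ) → ℝ)
    (hdiff : ∀ p, Differentiable ℝ fun y => u (p, y))
    (hu1 : Integrable (fun z : P × (Fin d → ℝ) => u z ^ 2 *
        (c * Real.exp (-(a z.1 + ∑ j, z.2 j ^ 2) / 4)))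
      ((volume : Measure P).prod volume))
    (hu2 : Integrable (fun z : P × (Fin d → ℝ) =>
        ‖fderiv ℝ (fun y => u (z.1, y)) z.2‖ ^ 2 *
        (c * Real.exp (-(a z.1 + ∑ j, z.2 j ^ 2) / 4)))
      ((volume : Measure P).prod volume))
    (hu3 : Integrable (fun z : P × (Fin d → ℝ) => z.2 i ^ 2 * (u z ^ 2 *
        (c * Real.exp (-(a z.1 + ∑ j, z.2 j ^ 2) / 4))))
      ((volume : Measure P).prod volume)) :
    ∫ z : P × (Fin d → ℝ), z.2 i ^ 2 * (u z ^ 2 *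
        (c * Real.exp (-(a z.1 + ∑ j, z.2 j ^ 2) / 4)))
        ∂((volume : Measure P).prod volume) ≤
      4 * (∫ z : P × (Fin d → ℝ), u z ^ 2 * (c * Real.exp (-(a z.1 + ∑ j, z.2 j ^ 2) / 4))
        ∂((volume : Measure P).prod volume)) +
      16 * ∫ z : P × (Fin d → ℝ), ‖fderiv ℝ (fun y => u (z.1, y)) z.2‖ ^ 2 *
        (c * Real.exp (-(a z.1 + ∑ j, z.2 j ^ 2) / 4))
        ∂((volume : Measure P).prod volume) := by
  have hae : ∀ᵐ p ∂(volume : Measure P),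
      (∫ y : Fin d → ℝ, y i ^ 2 * (u (p, y) ^ 2 *
          (c * Real.exp (-(a p + ∑ j, y j ^ 2) / 4)))) ≤
      4 * (∫ y : Fin d → ℝ, u (p, y) ^ 2 * (c * Real.exp (-(a p + ∑ j, y j ^ 2) / 4))) +
      16 * ∫ y : Fin d → ℝ, ‖fderiv ℝ (fun y' => u (p, y')) y‖ ^ 2 *
          (c * Real.exp (-(a p + ∑ j, y j ^ 2) / 4)) := by
    filter_upwards [hu1.prod_right_ae, hu2.prod_right_ae, hu3.prod_right_ae]
      with p hp1 hp2 hp3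
    set K := c * Real.exp (-(a p) / 4) with hKdef
    have hKpos : 0 < K := by positivity
    set v : (Fin d → ℝ) → ℝ := fun y => u (p, y) with hv
    have hWid : ∀ y : Fin d → ℝ, c * Real.exp (-(a p + ∑ j, y j ^ 2) / 4)
        = Real.exp (-(∑ j, y j ^ 2) / 4) * K := by
      intro y
      rw [hKdef, show -(a p + ∑ j, y j ^ 2) / 4 = -(∑ j, y j ^ 2) / 4 + -(a p) / 4 by ring,
        Real.exp_add]
      ring
    have e1 : ∀ y : Fin d → ℝ, u (p, y) ^ 2 * (c * Real.exp (-(a p + ∑ j, y j ^ 2) / 4))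
        = v y ^ 2 * Real.exp (-(∑ j, y j ^ 2) / 4) * K := by
      intro y; rw [hWid]; ring
    have e2 : ∀ y : Fin d → ℝ, ‖fderiv ℝ (fun y' => u (p, y')) y‖ ^ 2 *
          (c * Real.exp (-(a p + ∑ j, y j ^ 2) / 4))
        = ‖fderiv ℝ v y‖ ^ 2 * Real.exp (-(∑ j, y j ^ 2) / 4) * K := by
      intro y; rw [hWid]; ring
    have e3 : ∀ y : Fin d → ℝ, y i ^ 2 * (u (p, y) ^ 2 *
          (c * Real.exp (-(a p + ∑ j, y j ^ 2) / 4)))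
        = y i ^ 2 * (v y ^ 2 * Real.exp (-(∑ j, y j ^ 2) / 4)) * K := by
      intro y; rw [hWid]; ring
    have hi1 : Integrable (fun y : Fin d → ℝ => v y ^ 2 * Real.exp (-(∑ j, y j ^ 2) / 4)) :=
      integrable_of_mul_const' hKpos.ne'
        (hp1.congr (Filter.Eventually.of_forall fun y => e1 y))
    have hi2 : Integrable
        (fun y : Fin d → ℝ => ‖fderiv ℝ v y‖ ^ 2 * Real.exp (-(∑ j, y j ^ 2) / 4)) :=
      integrable_of_mul_const' hKpos.ne'
        (hp2.congr (Filter.Eventually.of_forall fun y => e2 y))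
    have hi3 : Integrable
        (fun y : Fin d → ℝ => y i ^ 2 * (v y ^ 2 * Real.exp (-(∑ j, y j ^ 2) / 4))) :=
      integrable_of_mul_const' hKpos.ne'
        (hp3.congr (Filter.Eventually.of_forall fun y => e3 y))
    have hRd := Rd i (hdiff p) hi1 hi2 hi3
    have eint1 : (∫ y : Fin d → ℝ, u (p, y) ^ 2 * (c * Real.exp (-(a p + ∑ j, y j ^ 2) / 4)))
        = (∫ y : Fin d → ℝ, v y ^ 2 * Real.exp (-(∑ j, y j ^ 2) / 4)) * K := by
      rw [← integral_mul_const]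
      exact integral_congr_ae (Filter.Eventually.of_forall fun y => e1 y)
    have eint2 : (∫ y : Fin d → ℝ, ‖fderiv ℝ (fun y' => u (p, y')) y‖ ^ 2 *
          (c * Real.exp (-(a p + ∑ j, y j ^ 2) / 4)))
        = (∫ y : Fin d → ℝ, ‖fderiv ℝ v y‖ ^ 2 * Real.exp (-(∑ j, y j ^ 2) / 4)) * K := by
      rw [← integral_mul_const]
      exact integral_congr_ae (Filter.Eventually.of_forall fun y => e2 y)
    have eint3 : (∫ y : Fin d → ℝ, y i ^ 2 * (u (p, y) ^ 2 *
          (c * Real.exp (-(a p + ∑ j, y j ^ 2) / 4))))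
        = (∫ y : Fin d → ℝ, y i ^ 2 * (v y ^ 2 * Real.exp (-(∑ j, y j ^ 2) / 4))) * K := by
      rw [← integral_mul_const]
      exact integral_congr_ae (Filter.Eventually.of_forall fun y => e3 y)
    rw [eint1, eint2, eint3]
    calc (∫ y : Fin d → ℝ, y i ^ 2 * (v y ^ 2 * Real.exp (-(∑ j, y j ^ 2) / 4))) * K ≤
        (4 * (∫ y : Fin d → ℝ, v y ^ 2 * Real.exp (-(∑ j, y j ^ 2) / 4)) +
          16 * ∫ y : Fin d → ℝ, ‖fderiv ℝ v y‖ ^ 2 * Real.exp (-(∑ j, y j ^ 2) / 4)) * K :=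
        mul_le_mul_of_nonneg_right hRd hKpos.le
      _ = 4 * ((∫ y : Fin d → ℝ, v y ^ 2 * Real.exp (-(∑ j, y j ^ 2) / 4)) * K) +
          16 * ((∫ y : Fin d → ℝ, ‖fderiv ℝ v y‖ ^ 2 * Real.exp (-(∑ j, y j ^ 2) / 4)) * K) := by
        ring
  have hO1 : Integrable (fun p : P => ∫ y : Fin d → ℝ, u (p, y) ^ 2 *
      (c * Real.exp (-(a p + ∑ j, y j ^ 2) / 4))) (volume : Measure P) :=
    hu1.integral_prod_left
  have hO2 : Integrable (fun p : P => ∫ y : Fin d → ℝ,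
      ‖fderiv ℝ (fun y' => u (p, y')) y‖ ^ 2 *
      (c * Real.exp (-(a p + ∑ j, y j ^ 2) / 4))) (volume : Measure P) :=
    hu2.integral_prod_left
  have hO3 : Integrable (fun p : P => ∫ y : Fin d → ℝ, y i ^ 2 * (u (p, y) ^ 2 *
      (c * Real.exp (-(a p + ∑ j, y j ^ 2) / 4)))) (volume : Measure P) :=
    hu3.integral_prod_left
  calc ∫ z : P × (Fin d → ℝ), z.2 i ^ 2 * (u z ^ 2 *
        (c * Real.exp (-(a z.1 + ∑ j, z.2 j ^ 2) / 4)))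
        ∂((volume : Measure P).prod volume)
      = ∫ p : P, ∫ y : Fin d → ℝ, y i ^ 2 * (u (p, y) ^ 2 *
          (c * Real.exp (-(a p + ∑ j, y j ^ 2) / 4))) := integral_prod _ hu3
    _ ≤ ∫ p : P, (4 * (∫ y : Fin d → ℝ, u (p, y) ^ 2 *
          (c * Real.exp (-(a p + ∑ j, y j ^ 2) / 4))) +
        16 * ∫ y : Fin d → ℝ, ‖fderiv ℝ (fun y' => u (p, y')) y‖ ^ 2 *
          (c * Real.exp (-(a p + ∑ j, y j ^ 2) / 4))) :=
        integral_mono_ae hO3 ((hO1.const_mul 4).add (hO2.const_mul 16)) hae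
    _ = 4 * (∫ p : P, ∫ y : Fin d → ℝ, u (p, y) ^ 2 *
          (c * Real.exp (-(a p + ∑ j, y j ^ 2) / 4))) +
        16 * ∫ p : P, ∫ y : Fin d → ℝ, ‖fderiv ℝ (fun y' => u (p, y')) y‖ ^ 2 *
          (c * Real.exp (-(a p + ∑ j, y j ^ 2) / 4)) := by
        rw [integral_add (hO1.const_mul 4) (hO2.const_mul 16), integral_const_mul,
          integral_const_mul]
    _ = 4 * (∫ z : P × (Fin d → ℝ), u z ^ 2 * (c * Real.exp (-(a z.1 + ∑ j, z.2 j ^ 2) / 4))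
          ∂((volume : Measure P).prod volume)) +
        16 * ∫ z : P × (Fin d → ℝ), ‖fderiv ℝ (fun y => u (z.1, y)) z.2‖ ^ 2 *
          (c * Real.exp (-(a z.1 + ∑ j, z.2 j ^ 2) / 4))
          ∂((volume : Measure P).prod volume) := by
        rw [integral_prod _ hu1, integral_prod _ hu2]

/-- Gaussian Poincaré inequality on a cylinder `Γ = Γ̊ × ℝ^{n-k}`: the cross-section `Γ̊`
is encoded as a finite measure space `P` with a bounded position map `x₀ : P → ℝ^{k+m}`,
and the Gaussian weight is `ρ = (4π)^{-n/2} e^{-(|x₀(p)|² + |y|²)/4}`. There is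
`C = C(n, Γ̊)` such that for every `u ∈ W^{1,2}(Γ, ρ)`,
`∫ ⟨x⟩² u² ρ ≤ C (∫ u² ρ + ∫ |∇̄u|² ρ)`, where `∇̄` differentiates only in the
Euclidean factor directions. -/
theorem stmt_13 (n k m d : ℕ) (hd : d = n - k)
    (P : Type*) [MeasureSpace P] [IsFiniteMeasure (volume : Measure P)]
    (x₀ : P → EuclideanSpace ℝ (Fin (k + m))) (D : ℝ) (hD : ∀ p, ‖x₀ p‖ ≤ D) :
    ∃ C : ℝ, 0 < C ∧ ∀ u : P × (Fin d → ℝ) → ℝ,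
      (∀ p, Differentiable ℝ (fun y => u (p, y))) →
      Integrable (fun z : P × (Fin d → ℝ) => u z ^ 2 *
          (((4 * π) ^ ((n : ℝ) / 2))⁻¹ *
            Real.exp (-(‖x₀ z.1‖ ^ 2 + ∑ i, z.2 i ^ 2) / 4)))
        ((volume : Measure P).prod (volume : Measure (Fin d → ℝ))) →
      Integrable (fun z : P × (Fin d → ℝ) =>
          ‖fderiv ℝ (fun y => u (z.1, y)) z.2‖ ^ 2 *
          (((4 * π) ^ ((n : ℝ) / 2))⁻¹ *
            Real.exp (-(‖x₀ z.1‖ ^ 2 + ∑ i, z.2 i ^ 2) / 4)))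
        ((volume : Measure P).prod (volume : Measure (Fin d → ℝ))) →
      (∫ z : P × (Fin d → ℝ),
          (1 + ‖x₀ z.1‖ ^ 2 + ∑ i, z.2 i ^ 2) * u z ^ 2 *
            (((4 * π) ^ ((n : ℝ) / 2))⁻¹ *
              Real.exp (-(‖x₀ z.1‖ ^ 2 + ∑ i, z.2 i ^ 2) / 4))
          ∂((volume : Measure P).prod (volume : Measure (Fin d → ℝ)))) ≤
        C * ((∫ z : P × (Fin d → ℝ),
            u z ^ 2 * (((4 * π) ^ ((n : ℝ) / 2))⁻¹ *
              Real.exp (-(‖x₀ z.1‖ ^ 2 + ∑ i, z.2 i ^ 2) / 4))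
            ∂((volume : Measure P).prod (volume : Measure (Fin d → ℝ)))) +
          ∫ z : P × (Fin d → ℝ),
            ‖fderiv ℝ (fun y => u (z.1, y)) z.2‖ ^ 2 *
              (((4 * π) ^ ((n : ℝ) / 2))⁻¹ *
                Real.exp (-(‖x₀ z.1‖ ^ 2 + ∑ i, z.2 i ^ 2) / 4))
            ∂((volume : Measure P).prod (volume : Measure (Fin d → ℝ)))) := by
  have hπ : (0:ℝ) < 4 * π := by positivity
  set c : ℝ := ((4 * π) ^ ((n : ℝ) / 2))⁻¹ with hcdef
  have hc : 0 < c := by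
    rw [hcdef]
    exact inv_pos.2 (Real.rpow_pos_of_pos hπ _)
  refine ⟨1 + D ^ 2 + 20 * d, by positivity, ?_⟩
  intro u hdiff hu1 hu2
  set μ := (volume : Measure P).prod (volume : Measure (Fin d → ℝ)) with hμ
  have hI1 : (0:ℝ) ≤ ∫ z : P × (Fin d → ℝ), u z ^ 2 *
      (c * Real.exp (-(‖x₀ z.1‖ ^ 2 + ∑ i, z.2 i ^ 2) / 4)) ∂μ :=
    integral_nonneg fun z => by positivity
  have hI2 : (0:ℝ) ≤ ∫ z : P × (Fin d → ℝ), ‖fderiv ℝ (fun y => u (z.1, y)) z.2‖ ^ 2 *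
      (c * Real.exp (-(‖x₀ z.1‖ ^ 2 + ∑ i, z.2 i ^ 2) / 4)) ∂μ :=
    integral_nonneg fun z => by positivity
  by_cases hInt : Integrable (fun z : P × (Fin d → ℝ) =>
      (1 + ‖x₀ z.1‖ ^ 2 + ∑ i, z.2 i ^ 2) * u z ^ 2 *
        (c * Real.exp (-(‖x₀ z.1‖ ^ 2 + ∑ i, z.2 i ^ 2) / 4))) μ
  swap
  · rw [integral_undef hInt]
    have hC : (0:ℝ) ≤ 1 + D ^ 2 + 20 * d := by positivity
    exact mul_nonneg hC (add_nonneg hI1 hI2)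
  -- the integrable case
  have hsum_nonneg : ∀ z : P × (Fin d → ℝ), (0:ℝ) ≤ ∑ i, z.2 i ^ 2 := fun z =>
    Finset.sum_nonneg fun i _ => sq_nonneg _
  have hsummeas : Measurable (fun z : P × (Fin d → ℝ) => ∑ i, z.2 i ^ 2) := by
    exact Finset.measurable_sum _ fun i _ =>
      ((measurable_pi_apply i).comp measurable_snd).pow_const 2
  -- piece 2 : (∑ y_i^2) u^2 ρ
  have hP2 : Integrable (fun z : P × (Fin d → ℝ) => (∑ i, z.2 i ^ 2) *
      (u z ^ 2 * (c * Real.exp (-(‖x₀ z.1‖ ^ 2 + ∑ i, z.2 i ^ 2) / 4)))) μ := by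
    refine Integrable.mono' hInt
      (hsummeas.aestronglyMeasurable.mul hu1.aestronglyMeasurable)
      (Filter.Eventually.of_forall fun z => ?_)
    rw [Real.norm_eq_abs, abs_of_nonneg (by positivity)]
    have h1 : (0:ℝ) ≤ u z ^ 2 * (c * Real.exp (-(‖x₀ z.1‖ ^ 2 + ∑ i, z.2 i ^ 2) / 4)) := by
      positivity
    nlinarith [hsum_nonneg z, sq_nonneg (‖x₀ z.1‖)]
  have hP1 : Integrable (fun z : P × (Fin d → ℝ) => (1 + ‖x₀ z.1‖ ^ 2) *
      (u z ^ 2 * (c * Real.exp (-(‖x₀ z.1‖ ^ 2 + ∑ i, z.2 i ^ 2) / 4)))) μ := by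
    refine (hInt.sub hP2).congr (Filter.Eventually.of_forall fun z => ?_)
    simp only [Pi.sub_apply]
    ring
  -- split the LHS
  have hsplit : (∫ z : P × (Fin d → ℝ),
        (1 + ‖x₀ z.1‖ ^ 2 + ∑ i, z.2 i ^ 2) * u z ^ 2 *
          (c * Real.exp (-(‖x₀ z.1‖ ^ 2 + ∑ i, z.2 i ^ 2) / 4)) ∂μ)
      = (∫ z : P × (Fin d → ℝ), (1 + ‖x₀ z.1‖ ^ 2) *
          (u z ^ 2 * (c * Real.exp (-(‖x₀ z.1‖ ^ 2 + ∑ i, z.2 i ^ 2) / 4))) ∂μ)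
        + ∫ z : P × (Fin d → ℝ), (∑ i, z.2 i ^ 2) *
          (u z ^ 2 * (c * Real.exp (-(‖x₀ z.1‖ ^ 2 + ∑ i, z.2 i ^ 2) / 4))) ∂μ := by
    rw [← integral_add hP1 hP2]
    exact integral_congr_ae (Filter.Eventually.of_forall fun z => by ring)
  -- bound piece 1
  have hb1 : (∫ z : P × (Fin d → ℝ), (1 + ‖x₀ z.1‖ ^ 2) *
        (u z ^ 2 * (c * Real.exp (-(‖x₀ z.1‖ ^ 2 + ∑ i, z.2 i ^ 2) / 4))) ∂μ)
      ≤ (1 + D ^ 2) * ∫ z : P × (Fin d → ℝ), u z ^ 2 *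
          (c * Real.exp (-(‖x₀ z.1‖ ^ 2 + ∑ i, z.2 i ^ 2) / 4)) ∂μ := by
    rw [← integral_const_mul]
    refine integral_mono hP1 (hu1.const_mul _) fun z => ?_
    have hx : ‖x₀ z.1‖ ^ 2 ≤ D ^ 2 := by
      have h0 : (0:ℝ) ≤ ‖x₀ z.1‖ := norm_nonneg _
      nlinarith [hD z.1]
    have h1 : (0:ℝ) ≤ u z ^ 2 * (c * Real.exp (-(‖x₀ z.1‖ ^ 2 + ∑ i, z.2 i ^ 2) / 4)) := by
      positivity
    nlinarith
  -- piece 2 termwise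
  have hPi : ∀ i : Fin d, Integrable (fun z : P × (Fin d → ℝ) => z.2 i ^ 2 *
      (u z ^ 2 * (c * Real.exp (-(‖x₀ z.1‖ ^ 2 + ∑ i, z.2 i ^ 2) / 4)))) μ := by
    intro i
    refine Integrable.mono' hP2
      ((((measurable_pi_apply i).comp measurable_snd).pow_const 2).aestronglyMeasurable.mul
        hu1.aestronglyMeasurable)
      (Filter.Eventually.of_forall fun z => ?_)
    rw [Real.norm_eq_abs, abs_of_nonneg (by positivity)]
    have h1 : (0:ℝ) ≤ u z ^ 2 * (c * Real.exp (-(‖x₀ z.1‖ ^ 2 + ∑ i, z.2 i ^ 2) / 4)) := by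
      positivity
    have h2 : z.2 i ^ 2 ≤ ∑ j, z.2 j ^ 2 :=
      Finset.single_le_sum (f := fun j => z.2 j ^ 2) (fun j _ => sq_nonneg _) (mem_univ i)
    nlinarith
  have hb2 : (∫ z : P × (Fin d → ℝ), (∑ i, z.2 i ^ 2) *
        (u z ^ 2 * (c * Real.exp (-(‖x₀ z.1‖ ^ 2 + ∑ i, z.2 i ^ 2) / 4))) ∂μ)
      ≤ (d : ℝ) * (4 * (∫ z : P × (Fin d → ℝ), u z ^ 2 *
          (c * Real.exp (-(‖x₀ z.1‖ ^ 2 + ∑ i, z.2 i ^ 2) / 4)) ∂μ) +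
        16 * ∫ z : P × (Fin d → ℝ), ‖fderiv ℝ (fun y => u (z.1, y)) z.2‖ ^ 2 *
          (c * Real.exp (-(‖x₀ z.1‖ ^ 2 + ∑ i, z.2 i ^ 2) / 4)) ∂μ) := by
    have hsum_int : (∫ z : P × (Fin d → ℝ), (∑ i, z.2 i ^ 2) *
          (u z ^ 2 * (c * Real.exp (-(‖x₀ z.1‖ ^ 2 + ∑ i, z.2 i ^ 2) / 4))) ∂μ)
        = ∑ i : Fin d, ∫ z : P × (Fin d → ℝ), z.2 i ^ 2 *
          (u z ^ 2 * (c * Real.exp (-(‖x₀ z.1‖ ^ 2 + ∑ i, z.2 i ^ 2) / 4))) ∂μ := by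
      rw [← integral_finset_sum univ (fun i _ => hPi i)]
      refine integral_congr_ae (Filter.Eventually.of_forall fun z => ?_)
      show (∑ i : Fin d, z.2 i ^ 2) *
          (u z ^ 2 * (c * Real.exp (-(‖x₀ z.1‖ ^ 2 + ∑ i, z.2 i ^ 2) / 4)))
        = ∑ i : Fin d, z.2 i ^ 2 *
          (u z ^ 2 * (c * Real.exp (-(‖x₀ z.1‖ ^ 2 + ∑ i, z.2 i ^ 2) / 4)))
      rw [Finset.sum_mul]
    rw [hsum_int]
    have hbound : ∀ i : Fin d, (∫ z : P × (Fin d → ℝ), z.2 i ^ 2 *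
          (u z ^ 2 * (c * Real.exp (-(‖x₀ z.1‖ ^ 2 + ∑ i, z.2 i ^ 2) / 4))) ∂μ)
        ≤ 4 * (∫ z : P × (Fin d → ℝ), u z ^ 2 *
          (c * Real.exp (-(‖x₀ z.1‖ ^ 2 + ∑ i, z.2 i ^ 2) / 4)) ∂μ) +
        16 * ∫ z : P × (Fin d → ℝ), ‖fderiv ℝ (fun y => u (z.1, y)) z.2‖ ^ 2 *
          (c * Real.exp (-(‖x₀ z.1‖ ^ 2 + ∑ i, z.2 i ^ 2) / 4)) ∂μ := by
      intro i
      exact per_i i (fun p => ‖x₀ p‖ ^ 2) c hc u hdiff hu1 hu2 (hPi i)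
    calc (∑ i : Fin d, ∫ z : P × (Fin d → ℝ), z.2 i ^ 2 *
          (u z ^ 2 * (c * Real.exp (-(‖x₀ z.1‖ ^ 2 + ∑ i, z.2 i ^ 2) / 4))) ∂μ)
        ≤ ∑ _i : Fin d, (4 * (∫ z : P × (Fin d → ℝ), u z ^ 2 *
            (c * Real.exp (-(‖x₀ z.1‖ ^ 2 + ∑ i, z.2 i ^ 2) / 4)) ∂μ) +
          16 * ∫ z : P × (Fin d → ℝ), ‖fderiv ℝ (fun y => u (z.1, y)) z.2‖ ^ 2 *
            (c * Real.exp (-(‖x₀ z.1‖ ^ 2 + ∑ i, z.2 i ^ 2) / 4)) ∂μ) :=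
        Finset.sum_le_sum fun i _ => hbound i
      _ = (d : ℝ) * _ := by
        rw [Finset.sum_const, card_univ, Fintype.card_fin, nsmul_eq_mul]
  calc (∫ z : P × (Fin d → ℝ),
        (1 + ‖x₀ z.1‖ ^ 2 + ∑ i, z.2 i ^ 2) * u z ^ 2 *
          (c * Real.exp (-(‖x₀ z.1‖ ^ 2 + ∑ i, z.2 i ^ 2) / 4)) ∂μ)
      = _ + _ := hsplit
    _ ≤ (1 + D ^ 2) * (∫ z : P × (Fin d → ℝ), u z ^ 2 *
          (c * Real.exp (-(‖x₀ z.1‖ ^ 2 + ∑ i, z.2 i ^ 2) / 4)) ∂μ) +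
        (d : ℝ) * (4 * (∫ z : P × (Fin d → ℝ), u z ^ 2 *
          (c * Real.exp (-(‖x₀ z.1‖ ^ 2 + ∑ i, z.2 i ^ 2) / 4)) ∂μ) +
        16 * ∫ z : P × (Fin d → ℝ), ‖fderiv ℝ (fun y => u (z.1, y)) z.2‖ ^ 2 *
          (c * Real.exp (-(‖x₀ z.1‖ ^ 2 + ∑ i, z.2 i ^ 2) / 4)) ∂μ) := add_le_add hb1 hb2
    _ ≤ (1 + D ^ 2 + 20 * d) * ((∫ z : P × (Fin d → ℝ), u z ^ 2 *
          (c * Real.exp (-(‖x₀ z.1‖ ^ 2 + ∑ i, z.2 i ^ 2) / 4)) ∂μ) +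
        ∫ z : P × (Fin d → ℝ), ‖fderiv ℝ (fun y => u (z.1, y)) z.2‖ ^ 2 *
          (c * Real.exp (-(‖x₀ z.1‖ ^ 2 + ∑ i, z.2 i ^ 2) / 4)) ∂μ) := by
      have hd0 : (0:ℝ) ≤ (d : ℝ) := Nat.cast_nonneg d
      nlinarith [mul_nonneg hd0 hI1, mul_nonneg hd0 hI2, sq_nonneg D,
        mul_nonneg (sq_nonneg D) hI1, mul_nonneg (sq_nonneg D) hI2]
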